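/- Let $\Delta \sim$ Laplace($\lambda$) and suppose $\alpha = \alpha_c\alpha_d > e^{-\lambda G^{\max}}$. Then $\mathbb{E}[\alpha(G^{\max}+\Delta)^+ - (G^{\max}+\Delta)^-] > 0$. -/

import Mathlib

open MeasureTheory Real Set Filter Topology

private lemma hasDerivAt_linexp (a b l x : ℝ) :
    HasDerivAt (fun x => (a * x + b) * exp (-(l * x)))
      ((a - l * (a * x + b)) * exp (-(l * x))) x := by
  have h1 : HasDerivAt (fun x : ℝ => a * x + b) a x := by
    simpa using ((hasDerivAt_id x).const_mul a).add_const b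
  have h3 : HasDerivAt (fun x : ℝ => -(l * x)) (-l) x := by
    simpa [Pi.neg_def] using ((hasDerivAt_id x).const_mul l).neg
  have h2 : HasDerivAt (fun x : ℝ => exp (-(l * x))) (exp (-(l * x)) * (-l)) x :=
    h3.exp
  have : HasDerivAt (fun x => (a * x + b) * exp (-(l * x)))
      (a * exp (-(l * x)) + (a * x + b) * (exp (-(l * x)) * -l)) x := h1.mul h2
  convert this using 1
  ring

private lemma tendsto_linexp (a b l : ℝ) (hl : 0 < l) :
    Tendsto (fun x : ℝ => (a * x + b) * exp (-(l * x))) atTop (𝓝 0) := by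
  have h1 : Tendsto (fun x : ℝ => x * exp (-(l * x))) atTop (𝓝 0) := by
    refine (tendsto_rpow_mul_exp_neg_mul_atTop_nhds_zero 1 l hl).congr' ?_
    filter_upwards [eventually_gt_atTop (0 : ℝ)] with x hx
    rw [rpow_one, neg_mul]
  have h2 : Tendsto (fun x : ℝ => exp (-(l * x))) atTop (𝓝 0) := by
    apply tendsto_exp_atBot.comp
    exact tendsto_neg_atTop_atBot.comp (tendsto_id.const_mul_atTop hl)
  have h := (h1.const_mul a).add (h2.const_mul b)
  simp only [mul_zero, add_zero] at h
  refine h.congr fun x => by ring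

/-- Drift condition for Laplace(λ) errors: if `α > e^{-λ Gᵐᵃˣ}` then
`E[α(Gᵐᵃˣ+Δ)⁺ - (Gᵐᵃˣ+Δ)⁻] > 0`. -/
theorem stmt11 (l Gmax αc αd : ℝ) (hl : 0 < l) (hGmax : 0 < Gmax)
    (hαc : αc ∈ Set.Ioo (0 : ℝ) 1) (hαd : αd ∈ Set.Ioo (0 : ℝ) 1)
    (h : exp (-(l * Gmax)) < αc * αd) :
    0 < ∫ δ : ℝ, (l / 2) * exp (-(l * |δ|)) *
      ((αc * αd) * max (Gmax + δ) 0 - max (-(Gmax + δ)) 0) := by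
  obtain ⟨hαc0, hαc1⟩ := hαc
  obtain ⟨hαd0, hαd1⟩ := hαd
  set α := αc * αd with hα
  have hα0 : 0 < α := mul_pos hαc0 hαd0
  have hα1 : α < 1 := by nlinarith
  set G := Gmax with hG
  set f : ℝ → ℝ := fun δ => (l / 2) * exp (-(l * |δ|)) *
      (α * max (G + δ) 0 - max (-(G + δ)) 0) with hf
  -- the function q and its antiderivative on (G, ∞)
  set q : ℝ → ℝ := fun x => (l / 2) * exp (-(l * x)) * (x - G) with hq
  have hg1deriv : ∀ x ∈ Ici G, HasDerivAt
      (fun x => (-(1/2) * x + -((1 - l * G) / (2 * l))) * exp (-(l * x))) (q x) x := by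
    intro x _
    convert hasDerivAt_linexp (-(1/2)) (-((1 - l * G) / (2 * l))) l x using 1
    simp only [hq]
    field_simp
    ring
  have hg1tend := tendsto_linexp (-(1/2)) (-((1 - l * G) / (2 * l))) l hl
  have hqpos : ∀ x ∈ Ioi G, 0 ≤ q x := by
    intro x hx
    have hx' : G < x := hx
    have : (0:ℝ) ≤ x - G := by linarith
    positivity
  have hq_int : IntegrableOn q (Ioi G) :=
    integrableOn_Ioi_deriv_of_nonneg' hg1deriv hqpos hg1tend
  have hq_val : ∫ x in Ioi G, q x = exp (-(l * G)) / (2 * l) := by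
    rw [integral_Ioi_of_hasDerivAt_of_nonneg' hg1deriv hqpos hg1tend]
    field_simp
    ring
  -- the function p and its antiderivative on (0, ∞)
  set p : ℝ → ℝ := fun x => (l / 2) * exp (-(l * x)) * (α * (G + x)) with hp
  have hg2deriv : ∀ x ∈ Ici (0:ℝ), HasDerivAt
      (fun x => (-(α/2) * x + -(α * (1 + l * G) / (2 * l))) * exp (-(l * x))) (p x) x := by
    intro x _
    convert hasDerivAt_linexp (-(α/2)) (-(α * (1 + l * G) / (2 * l))) l x using 1
    simp only [hp]
    field_simp
    ring
  have hg2tend := tendsto_linexp (-(α/2)) (-(α * (1 + l * G) / (2 * l))) l hl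
  have hppos : ∀ x ∈ Ioi (0:ℝ), 0 ≤ p x := by
    intro x hx
    have hx' : (0:ℝ) < x := hx
    have : (0:ℝ) < G + x := by linarith
    positivity
  have hp_int : IntegrableOn p (Ioi 0) :=
    integrableOn_Ioi_deriv_of_nonneg' hg2deriv hppos hg2tend
  have hp_val : ∫ x in Ioi 0, p x = α * (1 + l * G) / (2 * l) := by
    rw [integral_Ioi_of_hasDerivAt_of_nonneg' hg2deriv hppos hg2tend]
    field_simp
    simp only [zero_mul, mul_zero, neg_zero, exp_zero, zero_add, mul_one, zero_sub]
    ring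
  -- f agrees with p on (0, ∞)
  have f_eq_p : EqOn f p (Ioi 0) := by
    intro x hx
    have hx' : (0:ℝ) < x := hx
    have h1 : |x| = x := abs_of_pos hx'
    have h2 : max (G + x) 0 = G + x := max_eq_left (by linarith)
    have h3 : max (-(G + x)) 0 = 0 := max_eq_right (by linarith)
    simp only [hf, hp, h1, h2, h3]
    ring
  -- f is continuous
  have hf_cont : Continuous f := by
    apply Continuous.mul
    · exact continuous_const.mul (Real.continuous_exp.comp (continuous_const.mul continuous_abs).neg)
    · exact ((continuous_const.mul ((continuous_const.add continuous_id).max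
        continuous_const)).sub (((continuous_const.add continuous_id).neg).max
        continuous_const))
  have hf_int_Ioi0 : IntegrableOn f (Ioi 0) :=
    hp_int.congr_fun (fun x hx => (f_eq_p hx).symm) measurableSet_Ioi
  have hf_int_Ioc : IntegrableOn f (Ioc (-G) 0) := hf_cont.integrableOn_Ioc
  have hf_int_right : IntegrableOn f (Ioi (-G)) := by
    rw [← Ioc_union_Ioi_eq_Ioi (by linarith : -G ≤ (0:ℝ))]
    exact hf_int_Ioc.union hf_int_Ioi0
  -- f is nonnegative on (-G, ∞)
  have f_nonneg : ∀ x ∈ Ioi (-G), 0 ≤ f x := by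
    intro x hx
    have hx' : -G < x := hx
    have h2 : max (-(G + x)) 0 = 0 := max_eq_right (by linarith)
    have h3 : (0:ℝ) ≤ max (G + x) 0 := le_max_right _ _
    simp only [hf, h2, sub_zero]
    positivity
  -- reflection: f(-x) = -q(x) on (G, ∞)
  have f_reflect : ∀ x ∈ Ioi G, f (-x) = -q x := by
    intro x hx
    have hx' : G < x := hx
    have h0 : (0:ℝ) < x := lt_trans hGmax hx'
    have h1 : |(-x)| = x := by rw [abs_neg, abs_of_pos h0]
    have h2 : max (G + -x) 0 = 0 := max_eq_right (by linarith)
    have h3 : max (-(G + -x)) 0 = x - G := by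
      rw [max_eq_left (by linarith)]; ring
    simp only [hf, hq, h1, h2, h3]
    ring
  -- value on (-∞, -G]
  have hIic_val : ∫ x in Iic (-G), f x = -(exp (-(l * G)) / (2 * l)) := by
    rw [← integral_comp_neg_Ioi,
      setIntegral_congr_fun measurableSet_Ioi (fun x hx => f_reflect x hx),
      integral_neg, hq_val]
  -- integrability on (-∞, -G]
  have hIic_int : IntegrableOn f (Iic (-G)) := by
    have h1 : IntegrableOn (fun x => f (-x)) (Ioi G) :=
      IntegrableOn.congr_fun hq_int.neg (fun x hx => (f_reflect x hx).symm) measurableSet_Ioi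
    have h2 := (MeasurePreserving.integrableOn_comp_preimage
      (Measure.measurePreserving_neg (volume : Measure ℝ))
      (Homeomorph.neg ℝ).measurableEmbedding).2 h1
    have h3 : (Neg.neg ⁻¹' Ioi G : Set ℝ) = Iio (-G) := by
      ext x; simp [lt_neg]
    rw [h3] at h2
    rw [integrableOn_Iic_iff_integrableOn_Iio]
    exact h2.congr_fun (fun x _ => by simp [Function.comp]) measurableSet_Iio
  -- split the integral
  have hsplit := intervalIntegral.integral_Iic_add_Ioi hIic_int hf_int_right
  -- lower bound on the right part
  have hmono : ∫ x in Ioi (0:ℝ), f x ≤ ∫ x in Ioi (-G), f x := by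
    refine setIntegral_mono_set hf_int_right ?_ ?_
    · exact Filter.eventually_of_mem (self_mem_ae_restrict measurableSet_Ioi) f_nonneg
    · exact HasSubset.Subset.eventuallyLE (Ioi_subset_Ioi (by linarith))
  have hIoi0_val : ∫ x in Ioi (0:ℝ), f x = α * (1 + l * G) / (2 * l) := by
    rw [setIntegral_congr_fun measurableSet_Ioi f_eq_p, hp_val]
  show (0:ℝ) < ∫ x : ℝ, f x
  rw [← hsplit, hIic_val]
  rw [hIoi0_val] at hmono
  have key : exp (-(l * G)) / (2 * l) < α * (1 + l * G) / (2 * l) := by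
    have h1 : exp (-(l * G)) < α * (1 + l * G) := by
      nlinarith [mul_pos (mul_pos hα0 hl) hGmax]
    exact (div_lt_div_iff_of_pos_right (by linarith)).mpr h1
  linarith
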